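/- Let R₁, R₂ be multiplicative hyperrings with identity, α₁ ∈ End(R₁), α₂ ∈ End(R₂), and let ᾱ(r₁,r₂) = (α₁(r₁), α₂(r₂)) on the product hyperring R₁ × R₂. A hyperideal I₁ of R₁ is α₁-prime if and only if I₁ × R₂ is an ᾱ-prime hyperideal of R₁ × R₂. -/
import Mathlib


open Pointwise

namespace HyperPaper

/-- A commutative multiplicative hyperring on an additive commutative group:
the hypermultiplication is associative, commutative, subdistributive over `+`,
and compatible with negation. -/
structure MulHyperring (R : Type*) [AddCommGroup R] where
  hmul : R → R → Set R
  nonempty : ∀ a b, (hmul a b).Nonempty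
  comm : ∀ a b, hmul a b = hmul b a
  assoc : ∀ a b c, (⋃ t ∈ hmul a b, hmul t c) = ⋃ t ∈ hmul b c, hmul a t
  distrib : ∀ a b c, hmul a (b + c) ⊆ hmul a b + hmul a c
  hmul_neg : ∀ a b, hmul a (-b) = -(hmul a b)

variable {R : Type*} [AddCommGroup R]

/-- Product of two subsets under the hyperoperation. -/
def MulHyperring.setMul (H : MulHyperring R) (A B : Set R) : Set R :=
  ⋃ a ∈ A, ⋃ b ∈ B, H.hmul a b

/-- `H.hpow a n` is the `(n+1)`-fold hyperproduct `a ∘ a ∘ ⋯ ∘ a`. -/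
def MulHyperring.hpow (H : MulHyperring R) (a : R) : ℕ → Set R
  | 0 => {a}
  | n + 1 => H.setMul {a} (H.hpow a n)

/-- `H.hprod a l` is the hyperproduct of the list `a :: l`. -/
def MulHyperring.hprod (H : MulHyperring R) (a : R) : List R → Set R
  | [] => {a}
  | b :: l => H.setMul {a} (H.hprod b l)

/-- A hyperideal: an additive subgroup absorbing hypermultiplication. -/
structure Hyperideal (H : MulHyperring R) where
  carrier : Set R
  zero_mem : (0 : R) ∈ carrier
  sub_mem : ∀ a b, a ∈ carrier → b ∈ carrier → a - b ∈ carrier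
  absorb : ∀ r x, x ∈ carrier → H.hmul r x ⊆ carrier

/-- A C-hyperideal: any finite hyperproduct meeting it is contained in it. -/
def IsCHyperideal (H : MulHyperring R) (I : Hyperideal H) : Prop :=
  ∀ a (l : List R), (H.hprod a l ∩ I.carrier).Nonempty → H.hprod a l ⊆ I.carrier

/-- A good homomorphism between multiplicative hyperrings. -/
def IsGoodHom {R₁ R₂ : Type*} [AddCommGroup R₁] [AddCommGroup R₂]
    (H₁ : MulHyperring R₁) (H₂ : MulHyperring R₂) (f : R₁ → R₂) : Prop :=
  (∀ x y, f (x + y) = f x + f y) ∧ ∀ x y, f '' H₁.hmul x y = H₂.hmul (f x) (f y)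

/-- A good endomorphism. -/
def IsGoodEndo (H : MulHyperring R) (α : R → R) : Prop :=
  IsGoodHom H H α

/-- A proper hyperideal `I` is `α`-prime if `x ∘ y ⊆ I` implies `x ∈ I` or `α y ∈ I`. -/
def IsAlphaPrime (H : MulHyperring R) (α : R → R) (I : Hyperideal H) : Prop :=
  I.carrier ≠ Set.univ ∧
    ∀ x y, H.hmul x y ⊆ I.carrier → x ∈ I.carrier ∨ α y ∈ I.carrier

/-- A proper hyperideal `I` is prime if `x ∘ y ⊆ I` implies `x ∈ I` or `y ∈ I`. -/
def IsPrime (H : MulHyperring R) (I : Hyperideal H) : Prop :=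
  I.carrier ≠ Set.univ ∧
    ∀ x y, H.hmul x y ⊆ I.carrier → x ∈ I.carrier ∨ y ∈ I.carrier

/-- The radical `√S = {r | rⁿ ⊆ S for some n}`. -/
def radical (H : MulHyperring R) (S : Set R) : Set R :=
  {r | ∃ n : ℕ, H.hpow r n ⊆ S}

/-- The `α`-radical `ᵅ√S = {r | α(rⁿ) ⊆ S for some n}`. -/
def alphaRad (H : MulHyperring R) (α : R → R) (S : Set R) : Set R :=
  {r | ∃ n : ℕ, α '' H.hpow r n ⊆ S}

/-- The set of `α`-nilpotent elements. -/
def nilAlpha (H : MulHyperring R) (α : R → R) : Set R :=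
  {x | ∃ n : ℕ, (0 : R) ∈ α '' H.hpow x n}

/-- The `n`-fold set power of a hyperideal carrier: `idealPow H S n = S^(n+1)`. -/
def idealPow (H : MulHyperring R) (S : Set R) : ℕ → Set R
  | 0 => S
  | n + 1 => H.setMul S (idealPow H S n)

end HyperPaper

open HyperPaper

/-- `I₁` is `α₁`-prime in `R₁` iff `I₁ × R₂` is `ᾱ`-prime in the
product hyperring `R₁ × R₂`, where `ᾱ(r₁, r₂) = (α₁ r₁, α₂ r₂)`. -/
theorem stmt19 {R₁ R₂ : Type*} [AddCommGroup R₁] [AddCommGroup R₂]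
    (H₁ : MulHyperring R₁) (H₂ : MulHyperring R₂)
    (α₁ : R₁ → R₁) (α₂ : R₂ → R₂)
    (hα₁ : IsGoodEndo H₁ α₁) (hα₂ : IsGoodEndo H₂ α₂)
    (one₁ : R₁) (hone₁ : ∀ x : R₁, x ∈ H₁.hmul one₁ x) (h1ne₁ : one₁ ≠ 0)
    (one₂ : R₂) (hone₂ : ∀ x : R₂, x ∈ H₂.hmul one₂ x) (h1ne₂ : one₂ ≠ 0)
    (H : MulHyperring (R₁ × R₂))
    (hH : ∀ p q : R₁ × R₂,
      H.hmul p q = {x : R₁ × R₂ | x.1 ∈ H₁.hmul p.1 q.1 ∧ x.2 ∈ H₂.hmul p.2 q.2})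
    (I₁ : Hyperideal H₁) (J : Hyperideal H)
    (hJ : J.carrier = I₁.carrier ×ˢ (Set.univ : Set R₂)) :
    IsAlphaPrime H₁ α₁ I₁ ↔
      IsAlphaPrime H (fun p : R₁ × R₂ => (α₁ p.1, α₂ p.2)) J := by
  constructor
  · rintro ⟨hproper, hprime⟩
    constructor
    · intro h
      apply hproper
      ext x
      simp only [Set.mem_univ, iff_true]
      have : (x, (0 : R₂)) ∈ J.carrier := by rw [h]; trivial
      rw [hJ] at this
      exact this.1
    · intro p q hpq
      have hsub : H₁.hmul p.1 q.1 ⊆ I₁.carrier := by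
        intro a ha
        obtain ⟨b, hb⟩ := H₂.nonempty p.2 q.2
        have : (a, b) ∈ H.hmul p q := by rw [hH]; exact ⟨ha, hb⟩
        have := hpq this
        rw [hJ] at this
        exact this.1
      rcases hprime p.1 q.1 hsub with h | h
      · left; rw [hJ]; exact ⟨h, trivial⟩
      · right; rw [hJ]; exact ⟨h, trivial⟩
  · rintro ⟨hproper, hprime⟩
    constructor
    · intro h
      apply hproper
      rw [hJ, h]
      ext x; simp
    · intro x y hxy
      have hsub : H.hmul (x, 0) (y, 0) ⊆ J.carrier := by
        intro a ha
        rw [hH] at ha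
        rw [hJ]
        exact ⟨hxy ha.1, trivial⟩
      rcases hprime (x, 0) (y, 0) hsub with h | h
      · left; rw [hJ] at h; exact h.1
      · right; rw [hJ] at h; exact h.1
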